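/- Let G be a finite connected simple graph. If V(G) can be written as a union V(G) = V_1 ∪ … ∪ V_k such that for each i ∈ [k] the induced subgraph G[V_i] is a convex subgraph of G and μt(G[V_i]) = 0, then μt(G) = 0. -/

import Mathlib

open SimpleGraph

/-- Vertices `x` and `y` are `X`-visible in `G`: some shortest `x,y`-path has
no internal vertex in `X`. -/
def Visible {V : Type*} (G : SimpleGraph V) (X : Set V) (x y : V) : Prop :=
  ∃ p : G.Walk x y, p.length = G.dist x y ∧ ∀ v ∈ p.support, v ∈ X → v = x ∨ v = y

/-- `X` is a mutual-visibility set of `G`: every two vertices of `X` are `X`-visible. -/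
def IsMVSet {V : Type*} (G : SimpleGraph V) (X : Set V) : Prop :=
  ∀ x ∈ X, ∀ y ∈ X, Visible G X x y

/-- `X` is a total mutual-visibility set of `G`: every two vertices of `G` are
`X`-visible. -/
def IsTMVSet {V : Type*} (G : SimpleGraph V) (X : Set V) : Prop :=
  ∀ x y : V, Visible G X x y

/-- The mutual-visibility number of `G`: the maximum cardinality of a
mutual-visibility set. -/
noncomputable def mu {V : Type*} (G : SimpleGraph V) : ℕ :=
  sSup {n | ∃ X : Set V, IsMVSet G X ∧ X.ncard = n}

/-- The total mutual-visibility number of `G`: the maximum cardinality of a total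
mutual-visibility set. -/
noncomputable def muT {V : Type*} (G : SimpleGraph V) : ℕ :=
  sSup {n | ∃ X : Set V, IsTMVSet G X ∧ X.ncard = n}

/-- A feasible total mutual-visibility set: a total mutual-visibility set `S` such that
any two adjacent vertices of `S` have a common neighbor outside `S`. -/
def IsFeasibleTMVSet {V : Type*} (G : SimpleGraph V) (S : Set V) : Prop :=
  IsTMVSet G S ∧ ∀ x ∈ S, ∀ y ∈ S, G.Adj x y → ∃ z ∉ S, G.Adj x z ∧ G.Adj y z

/-- The strong product of two simple graphs. -/
def strongProd {α β : Type*} (G : SimpleGraph α) (H : SimpleGraph β) :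
    SimpleGraph (α × β) where
  Adj x y := (G.Adj x.1 y.1 ∧ x.2 = y.2) ∨ (x.1 = y.1 ∧ H.Adj x.2 y.2) ∨
    (G.Adj x.1 y.1 ∧ H.Adj x.2 y.2)
  symm := by
    constructor
    rintro ⟨a, b⟩ ⟨c, d⟩ (⟨h1, h2⟩ | ⟨h1, h2⟩ | ⟨h1, h2⟩)
    · exact Or.inl ⟨h1.symm, h2.symm⟩
    · exact Or.inr (Or.inl ⟨h1.symm, h2.symm⟩)
    · exact Or.inr (Or.inr ⟨h1.symm, h2.symm⟩)
  loopless := by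
    constructor
    rintro ⟨a, b⟩ (⟨h, _⟩ | ⟨_, h⟩ | ⟨h, _⟩)
    · exact G.irrefl h
    · exact H.irrefl h
    · exact G.irrefl h

/-- The iterated (associative) strong product of a finite family of graphs:
two tuples are adjacent iff they are distinct and agree or are adjacent in every
coordinate. -/
def strongProdPi {k : ℕ} {V : Fin k → Type*} (G : ∀ i, SimpleGraph (V i)) :
    SimpleGraph (∀ i, V i) where
  Adj x y := x ≠ y ∧ ∀ i, x i = y i ∨ (G i).Adj (x i) (y i)
  symm := by
    constructor
    rintro x y ⟨hne, h⟩
    exact ⟨hne.symm, fun i => (h i).imp Eq.symm fun hh => hh.symm⟩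
  loopless := ⟨fun x h => h.1 rfl⟩

/-- A universal vertex: adjacent to all other vertices. -/
def IsUniversal {V : Type*} (G : SimpleGraph V) (v : V) : Prop :=
  ∀ u : V, u ≠ v → G.Adj v u

/-- A cut vertex: its removal disconnects the graph. -/
def IsCutVertex {V : Type*} (G : SimpleGraph V) (v : V) : Prop :=
  ¬ (G.induce ({v}ᶜ : Set V)).Preconnected

/-- An induced path: a path with no chords between its vertices. -/
def IsInducedPath {V : Type*} (G : SimpleGraph V) {u v : V} (p : G.Walk u v) : Prop :=
  p.IsPath ∧ ∀ a b : V, a ∈ p.support → b ∈ p.support → G.Adj a b → s(a, b) ∈ p.edges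

/-- A block graph: a connected graph in which every pair of vertices is joined
by a unique induced path. -/
def IsBlockGraph {V : Type*} (G : SimpleGraph V) : Prop :=
  G.Connected ∧ ∀ u v : V, ∃! p : G.Walk u v, IsInducedPath G p

/-- A convex set of vertices: every shortest path of `G` between two of its
vertices stays inside the set. -/
def IsConvexSet {V : Type*} (G : SimpleGraph V) (A : Set V) : Prop :=
  ∀ x ∈ A, ∀ y ∈ A, ∀ p : G.Walk x y, p.length = G.dist x y → ∀ v ∈ p.support, v ∈ A

/-- A cactus graph: a connected graph in which every edge lies in at most one cycle,
i.e. two cycles sharing an edge have the same edge set. -/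
def IsCactus {V : Type*} (G : SimpleGraph V) : Prop :=
  G.Connected ∧ ∀ (v : V) (p q : G.Walk v v), p.IsCycle → q.IsCycle →
    ∀ e, e ∈ p.edges → e ∈ q.edges → ∀ e', e' ∈ p.edges ↔ e' ∈ q.edges

/-- A cograph: obtained from a single vertex by repeatedly adding twins, i.e. there is
an enumeration of the vertices in which every vertex except the first is, at the
moment of its addition, a (true or false) twin of some earlier vertex in the induced
subgraph on the vertices added so far. -/
def IsCograph {V : Type*} (G : SimpleGraph V) : Prop :=
  ∃ l : List V, l.Nodup ∧ (∀ v : V, v ∈ l) ∧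
    ∀ i : Fin l.length, (i : ℕ) ≠ 0 →
      ∃ j : Fin l.length, (j : ℕ) < (i : ℕ) ∧
        ∀ z ∈ l.take ((i : ℕ) + 1), z ≠ l.get i → z ≠ l.get j →
          (G.Adj (l.get i) z ↔ G.Adj (l.get j) z)

/-- An enabling vertex: a vertex `v` adjacent to every vertex `u` of `G - v` whose
degree in `G - v` is less than `n(G) - 2`. -/
def IsEnabling {V : Type*} [Fintype V] (G : SimpleGraph V) (v : V) : Prop :=
  ∀ u : V, u ≠ v → (G.neighborSet u \ {v}).ncard < Fintype.card V - 2 → G.Adj v u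


lemma walk_to_induce {V : Type*} {G : SimpleGraph V} {s : Set V} :
    ∀ {a b : V} (p : G.Walk a b) (_ : ∀ v ∈ p.support, v ∈ s) (ha : a ∈ s) (hb : b ∈ s),
    ∃ q : (G.induce s).Walk ⟨a, ha⟩ ⟨b, hb⟩,
      q.length = p.length ∧ ∀ v ∈ q.support, (v : V) ∈ p.support := by
  intro a b p
  induction p with
  | nil =>
    intro _ ha hb
    exact ⟨SimpleGraph.Walk.nil, by simp, by simp⟩
  | @cons u c b h p ih =>
    intro hsup ha hb
    have hc : c ∈ s := hsup c (by simp)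
    obtain ⟨q, hq1, hq2⟩ := ih (fun v hv => hsup v (by simp [hv])) hc hb
    refine ⟨SimpleGraph.Walk.cons (by exact h : (G.induce s).Adj ⟨u, ha⟩ ⟨c, hc⟩) q, by exact congrArg (· + 1) hq1, ?_⟩
    intro v hv
    change v ∈ (⟨u, ha⟩ : s) :: q.support at hv
    simp only [SimpleGraph.Walk.support_cons, List.mem_cons] at hv ⊢
    rcases hv with rfl | hv
    · exact Or.inl rfl
    · exact Or.inr (hq2 v hv)

def homInduce {V : Type*} (G : SimpleGraph V) (s : Set V) : G.induce s →g G :=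
  ⟨Subtype.val, fun h => h⟩

lemma tmv_empty {V : Type*} [Fintype V] (G : SimpleGraph V) (hG : G.Connected)
    {k : ℕ} (f : Fin k → Set V) (hcov : (⋃ i, f i) = Set.univ)
    (hconv : ∀ i, IsConvexSet G (f i))
    (hzero : ∀ i, muT (G.induce (f i)) = 0)
    (X : Set V) (hX : IsTMVSet G X) : X = ∅ := by
  by_contra hne
  obtain ⟨v, hv⟩ := Set.nonempty_iff_ne_empty.mpr hne
  have hvU : v ∈ ⋃ i, f i := hcov ▸ Set.mem_univ v
  obtain ⟨i, hvi⟩ := Set.mem_iUnion.mp hvU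
  set s := f i
  -- X restricted to s is a TMV set of the induced graph
  set X' : Set s := Subtype.val ⁻¹' X with hX'def
  have hTMV : IsTMVSet (G.induce s) X' := by
    intro x y
    obtain ⟨p, hplen, hpint⟩ := hX x.1 y.1
    have hsup : ∀ u ∈ p.support, u ∈ s := hconv i x.1 x.2 y.1 y.2 p hplen
    obtain ⟨q, hq1, hq2⟩ := walk_to_induce p hsup x.2 y.2
    have hdle : (G.induce s).dist x y ≤ q.length := SimpleGraph.dist_le q
    have hdge : G.dist x.1 y.1 ≤ (G.induce s).dist x y := by
      have hr : (G.induce s).Reachable x y := ⟨q⟩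
      obtain ⟨w, hw⟩ := hr.exists_walk_length_eq_dist
      calc G.dist x.1 y.1 ≤ (w.map (homInduce G s)).length := SimpleGraph.dist_le _
        _ = w.length := SimpleGraph.Walk.length_map _ _
        _ = _ := hw
    have hqd : q.length = (G.induce s).dist x y := by omega
    refine ⟨q, hqd, ?_⟩
    intro u hu huX
    have := hpint u.1 (hq2 u hu) huX
    rcases this with h | h
    · exact Or.inl (Subtype.ext h)
    · exact Or.inr (Subtype.ext h)
  -- contradiction with muT = 0
  have hmem : X'.ncard ∈ {n | ∃ Y : Set s, IsTMVSet (G.induce s) Y ∧ Y.ncard = n} :=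
    ⟨X', hTMV, rfl⟩
  have hbdd : BddAbove {n | ∃ Y : Set s, IsTMVSet (G.induce s) Y ∧ Y.ncard = n} := by
    refine ⟨Nat.card s, ?_⟩
    rintro n ⟨Y, _, rfl⟩
    simpa [Set.ncard_univ] using Set.ncard_le_ncard (Set.subset_univ Y) Set.finite_univ
  have h0 : X'.ncard ≤ 0 := by
    have := le_csSup hbdd hmem
    rw [show sSup {n | ∃ Y : Set s, IsTMVSet (G.induce s) Y ∧ Y.ncard = n} = muT (G.induce s) from rfl, hzero i] at this
    exact this
  have hX'ne : X' = ∅ := by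
    rw [← Set.ncard_eq_zero (Set.toFinite X')]; omega
  have : (⟨v, hvi⟩ : s) ∈ X' := hv
  rw [hX'ne] at this
  exact this


theorem stmt_0 {V : Type*} [Fintype V] (G : SimpleGraph V) (hG : G.Connected)
    {k : ℕ} (f : Fin k → Set V) (hcov : (⋃ i, f i) = Set.univ)
    (hconv : ∀ i, IsConvexSet G (f i))
    (hzero : ∀ i, muT (G.induce (f i)) = 0) :
    muT G = 0 := by
  have hempty : IsTMVSet G (∅ : Set V) := by
    intro x y
    obtain ⟨p, hp⟩ := ((hG.preconnected x y)).exists_walk_length_eq_dist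
    exact ⟨p, hp, fun v _ hv => absurd hv (Set.notMem_empty v)⟩
  have hS : {n | ∃ X : Set V, IsTMVSet G X ∧ X.ncard = n}.Nonempty :=
    ⟨0, ∅, hempty, Set.ncard_empty V⟩
  refine Nat.le_antisymm (csSup_le hS ?_) (Nat.zero_le _)
  rintro n ⟨X, hX, rfl⟩
  rw [tmv_empty G hG f hcov hconv hzero X hX, Set.ncard_empty]
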